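/- There exists a constant c_0 > 0, depending only on N, the potentials V_1, …, V_{N−1} and the constants a_1, …, a_{2N−2} ≥ 1, such that whenever a_0 ≥ c_0, for every (p,q) ∈ ℝ^N × ℝ^N one has (a_0/2) H(p,q)^{2N−1} ≤ W(p,q) ≤ 2 a_0 H(p,q)^{2N−1}. -/
import Mathlib

open Real Finset

noncomputable section

/-- Lie derivative of `g` along the vector field `F`. -/
def LieD {E : Type*} [NormedAddCommGroup E] [NormedSpace ℝ E]
    (F : E → E) (g : E → ℝ) (x : E) : ℝ :=
  fderiv ℝ g x (F x)

/-- Phase space of a chain of `N` rotators: `(p, q)`. -/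
abbrev RotState (N : ℕ) : Type := (Fin N → ℝ) × (Fin N → ℝ)

/-- Momentum with 0-based natural index, `0` out of range. -/
def pc {N : ℕ} (x : RotState N) (i : ℕ) : ℝ := if h : i < N then x.1 ⟨i, h⟩ else 0

/-- Position with 0-based natural index, `0` out of range. -/
def qc {N : ℕ} (x : RotState N) (i : ℕ) : ℝ := if h : i < N then x.2 ⟨i, h⟩ else 0

/-- `ξ_i = −V_i'(q_i − q_{i+1})` (0-based index `i`). -/
def xi (N : ℕ) (V : ℕ → ℝ → ℝ) (i : ℕ) (x : RotState N) : ℝ :=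
  -(deriv (V i) (qc x i - qc x (i + 1)))

/-- The explicit formula `L_F ξ_i = −(p_i − p_{i+1}) V_i''(q_i − q_{i+1})`. -/
def LFxi (N : ℕ) (V : ℕ → ℝ → ℝ) (i : ℕ) (x : RotState N) : ℝ :=
  -((pc x i - pc x (i + 1)) * deriv (deriv (V i)) (qc x i - qc x (i + 1)))

/-- Hamiltonian of the rotator chain. -/
def Ham (N : ℕ) (V : ℕ → ℝ → ℝ) (x : RotState N) : ℝ :=
  ∑ i : Fin N, (x.1 i) ^ 2 / 2 + ∑ i ∈ Finset.range (N - 1), V i (qc x i - qc x (i + 1))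

/-- Vector field of the damped rotator chain. -/
def Frot (N : ℕ) (V : ℕ → ℝ → ℝ) (x : RotState N) : RotState N :=
  (fun i => xi N V i x - (if (i : ℕ) = 0 then x.1 i else xi N V ((i : ℕ) - 1) x),
   fun i => x.1 i)

/-- The Lyapunov function `W`. -/
def Wrot (N : ℕ) (V : ℕ → ℝ → ℝ) (a : ℕ → ℝ) (x : RotState N) : ℝ :=
  a 0 * Ham N V x ^ (2 * N - 1) -
    ∑ i ∈ Finset.range (N - 1),
      (a (2 * i + 1) * Ham N V x ^ (2 * (N - 1) - (2 * i + 1)) * (pc x i * xi N V i x)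
        + a (2 * i + 2) * Ham N V x ^ (2 * (N - 1) - (2 * i + 2)) * (xi N V i x * LFxi N V i x))

/-- Standing assumptions on the interaction potentials. -/
structure RotAssumptions (N : ℕ) (V : ℕ → ℝ → ℝ) : Prop where
  smooth : ∀ i < N - 1, ContDiff ℝ 3 (V i)
  periodic : ∀ i < N - 1, Function.Periodic (V i) 1
  ge_one : ∀ i < N - 1, ∀ x : ℝ, 1 ≤ V i x
  nondeg : ∀ i < N - 1, ∀ x : ℝ, (deriv (V i) x) ^ 2 + (deriv (deriv (V i)) x) ^ 2 ≠ 0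
  top : ∀ i, N - 1 ≤ i → V i = fun _ => 0

lemma periodic_deriv' (f : ℝ → ℝ) (h : Function.Periodic f 1) :
    Function.Periodic (deriv f) 1 := by
  intro x
  have h1 : (fun y => f (y + 1)) = f := funext fun y => h y
  calc deriv f (x + 1) = deriv (fun y => f (y + 1)) x := (deriv_comp_add_const f 1 x).symm
    _ = deriv f x := by rw [h1]

lemma bound_exists (f : ℝ → ℝ) (hf : ContDiff ℝ 3 f) (hper : Function.Periodic f 1) :
    ∃ B, 1 ≤ B ∧ ∀ y, |deriv f y| ≤ B ∧ |deriv (deriv f) y| ≤ B := by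
  rw [show (3 : WithTop ℕ∞) = 2 + 1 by norm_num, contDiff_succ_iff_deriv] at hf
  have hd : ContDiff ℝ 2 (deriv f) := hf.2.2
  rw [show (2 : WithTop ℕ∞) = 1 + 1 by norm_num, contDiff_succ_iff_deriv] at hd
  have hc1 : Continuous (deriv f) := hd.1.continuous
  have hc2 : Continuous (deriv (deriv f)) := hd.2.2.continuous
  have hp1 : Function.Periodic (deriv f) 1 := periodic_deriv' f hper
  have hp2 : Function.Periodic (deriv (deriv f)) 1 := periodic_deriv' _ hp1
  obtain ⟨C1, hC1⟩ := (isCompact_Icc (a := (0:ℝ)) (b := 1)).exists_bound_of_continuousOn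
    hc1.continuousOn
  obtain ⟨C2, hC2⟩ := (isCompact_Icc (a := (0:ℝ)) (b := 1)).exists_bound_of_continuousOn
    hc2.continuousOn
  refine ⟨max (max C1 C2) 1, le_max_right _ _, fun y => ⟨?_, ?_⟩⟩
  · obtain ⟨z, hz, hzeq⟩ := hp1.exists_mem_Ico₀ one_pos y
    rw [hzeq]
    exact le_trans (le_trans (hC1 z ⟨hz.1, hz.2.le⟩) (le_max_left _ _)) (le_max_left _ _)
  · obtain ⟨z, hz, hzeq⟩ := hp2.exists_mem_Ico₀ one_pos y
    rw [hzeq]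
    exact le_trans (le_trans (hC2 z ⟨hz.1, hz.2.le⟩) (le_max_right _ _)) (le_max_left _ _)

theorem stmt1 (N : ℕ) (hN : 2 ≤ N) (V : ℕ → ℝ → ℝ) (hV : RotAssumptions N V)
    (a : ℕ → ℝ) (ha : ∀ k, 1 ≤ a k) :
    ∃ c₀ > (0 : ℝ), ∀ a₀ : ℝ, c₀ ≤ a₀ → ∀ x : RotState N,
      a₀ / 2 * Ham N V x ^ (2 * N - 1) ≤ Wrot N V (Function.update a 0 a₀) x ∧
      Wrot N V (Function.update a 0 a₀) x ≤ 2 * a₀ * Ham N V x ^ (2 * N - 1) := by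
  -- uniform bounds on the derivatives of the potentials
  have hBex : ∀ i, ∃ B, 1 ≤ B ∧ ∀ y, |deriv (V i) y| ≤ B ∧ |deriv (deriv (V i)) y| ≤ B := by
    intro i
    by_cases hi : i < N - 1
    · exact bound_exists _ (hV.smooth i hi) (hV.periodic i hi)
    · refine ⟨1, le_refl _, fun y => ?_⟩
      rw [hV.top i (le_of_not_gt hi)]
      simp
  choose B hB1 hB2 using hBex
  have hs2 : (0:ℝ) ≤ Real.sqrt 2 := Real.sqrt_nonneg 2
  set C : ℝ := ∑ i ∈ Finset.range (N-1),
      (a (2*i+1) * (Real.sqrt 2 * B i) + a (2*i+2) * (2 * Real.sqrt 2 * (B i)^2)) with hCdef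
  have hCnn : 0 ≤ C := by
    apply Finset.sum_nonneg
    intro i _
    have h1 := ha (2*i+1); have h2 := ha (2*i+2); have h3 := hB1 i
    have : (0:ℝ) ≤ B i := by linarith
    apply add_nonneg
    · exact mul_nonneg (by linarith) (mul_nonneg hs2 this)
    · exact mul_nonneg (by linarith) (mul_nonneg (by positivity) (by positivity))
  refine ⟨2*C + 1, by linarith, fun a₀ ha₀ x => ?_⟩
  set t := Ham N V x with ht
  -- the Hamiltonian is at least 1
  have hpot : ∀ i ∈ Finset.range (N-1), (1:ℝ) ≤ V i (qc x i - qc x (i+1)) :=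
    fun i hi => hV.ge_one i (Finset.mem_range.mp hi) _
  have hkinnn : (0:ℝ) ≤ ∑ i : Fin N, (x.1 i) ^ 2 / 2 :=
    Finset.sum_nonneg fun i _ => by positivity
  have hpotsum : ((N:ℝ) - 1) ≤ ∑ i ∈ Finset.range (N-1), V i (qc x i - qc x (i+1)) := by
    have := Finset.card_nsmul_le_sum (Finset.range (N-1)) _ 1 hpot
    simp only [Finset.card_range, nsmul_eq_mul, mul_one] at this
    have hcast : ((N - 1 : ℕ) : ℝ) = (N:ℝ) - 1 := by
      have : (1:ℕ) ≤ N := by omega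
      push_cast [this]; ring
    linarith [hcast ▸ this]
  have h1t : (1:ℝ) ≤ t := by
    rw [ht, Ham]
    have : (1:ℝ) ≤ (N:ℝ) - 1 := by
      have : (2:ℝ) ≤ (N:ℝ) := by exact_mod_cast hN
      linarith
    linarith
  have ht0 : (0:ℝ) ≤ t := by linarith
  -- momentum bounds
  have hkin : ∀ j, j < N → (pc x j)^2 ≤ 2 * t := by
    intro j hj
    have hsingle : (x.1 ⟨j, hj⟩)^2 / 2 ≤ ∑ i : Fin N, (x.1 i) ^ 2 / 2 :=
      Finset.single_le_sum (f := fun i : Fin N => (x.1 i)^2 / 2)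
        (fun i _ => by positivity) (Finset.mem_univ _)
    have hpos : (0:ℝ) ≤ ∑ i ∈ Finset.range (N-1), V i (qc x i - qc x (i+1)) :=
      Finset.sum_nonneg fun i hi => le_trans zero_le_one (hpot i hi)
    rw [pc, dif_pos hj]
    rw [ht, Ham]
    linarith
  have hpabs : ∀ j, j < N → |pc x j| ≤ Real.sqrt 2 * t := by
    intro j hj
    have h2 := hkin j hj
    rw [← Real.sqrt_sq_eq_abs]
    calc Real.sqrt ((pc x j)^2) ≤ Real.sqrt (2 * t^2) :=
          Real.sqrt_le_sqrt (by nlinarith)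
      _ = Real.sqrt 2 * t := by
          rw [Real.sqrt_mul (by norm_num), Real.sqrt_sq ht0]
  have hxiabs : ∀ i, |xi N V i x| ≤ B i := by
    intro i; rw [xi, abs_neg]; exact (hB2 i _).1
  have hLabs : ∀ i, i < N - 1 → |LFxi N V i x| ≤ 2 * (Real.sqrt 2 * t) * B i := by
    intro i hi
    rw [LFxi, abs_neg, abs_mul]
    have hBnn : (0:ℝ) ≤ B i := le_trans zero_le_one (hB1 i)
    apply mul_le_mul _ ((hB2 i _).2) (abs_nonneg _) (by positivity)
    calc |pc x i - pc x (i+1)| ≤ |pc x i| + |pc x (i+1)| := abs_sub _ _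
      _ ≤ Real.sqrt 2 * t + Real.sqrt 2 * t :=
          add_le_add (hpabs i (by omega)) (hpabs (i+1) (by omega))
      _ = 2 * (Real.sqrt 2 * t) := by ring
  -- per-term bound
  have hterm : ∀ i ∈ Finset.range (N-1),
      |a (2*i+1) * t ^ (2*(N-1) - (2*i+1)) * (pc x i * xi N V i x)
        + a (2*i+2) * t ^ (2*(N-1) - (2*i+2)) * (xi N V i x * LFxi N V i x)|
      ≤ (a (2*i+1) * (Real.sqrt 2 * B i) + a (2*i+2) * (2 * Real.sqrt 2 * (B i)^2))
          * t ^ (2*N-1) := by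
    intro i hi
    have hi' : i < N - 1 := Finset.mem_range.mp hi
    have ha1 : (0:ℝ) ≤ a (2*i+1) := le_trans zero_le_one (ha _)
    have ha2 : (0:ℝ) ≤ a (2*i+2) := le_trans zero_le_one (ha _)
    have hBnn : (0:ℝ) ≤ B i := le_trans zero_le_one (hB1 i)
    have htp1 : (0:ℝ) ≤ t ^ (2*(N-1) - (2*i+1)) := pow_nonneg ht0 _
    have htp2 : (0:ℝ) ≤ t ^ (2*(N-1) - (2*i+2)) := pow_nonneg ht0 _
    have key1 : |a (2*i+1) * t ^ (2*(N-1) - (2*i+1)) * (pc x i * xi N V i x)|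
        ≤ a (2*i+1) * (Real.sqrt 2 * B i) * t ^ (2*N-1) := by
      rw [abs_mul, abs_mul, abs_mul, abs_of_nonneg ha1, abs_of_nonneg htp1]
      calc a (2*i+1) * t ^ (2*(N-1) - (2*i+1)) * (|pc x i| * |xi N V i x|)
          ≤ a (2*i+1) * t ^ (2*(N-1) - (2*i+1)) * ((Real.sqrt 2 * t) * B i) := by
            apply mul_le_mul_of_nonneg_left _ (mul_nonneg ha1 htp1)
            exact mul_le_mul (hpabs i (by omega)) (hxiabs i) (abs_nonneg _)
              (by positivity)
        _ = a (2*i+1) * (Real.sqrt 2 * B i) * (t ^ (2*(N-1) - (2*i+1)) * t) := by ring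
        _ = a (2*i+1) * (Real.sqrt 2 * B i) * t ^ (2*(N-1) - (2*i+1) + 1) := by
            rw [pow_succ]
        _ ≤ a (2*i+1) * (Real.sqrt 2 * B i) * t ^ (2*N-1) := by
            apply mul_le_mul_of_nonneg_left (pow_le_pow_right₀ h1t (by omega))
            exact mul_nonneg ha1 (mul_nonneg hs2 hBnn)
    have key2 : |a (2*i+2) * t ^ (2*(N-1) - (2*i+2)) * (xi N V i x * LFxi N V i x)|
        ≤ a (2*i+2) * (2 * Real.sqrt 2 * (B i)^2) * t ^ (2*N-1) := by
      rw [abs_mul, abs_mul, abs_mul, abs_of_nonneg ha2, abs_of_nonneg htp2]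
      calc a (2*i+2) * t ^ (2*(N-1) - (2*i+2)) * (|xi N V i x| * |LFxi N V i x|)
          ≤ a (2*i+2) * t ^ (2*(N-1) - (2*i+2)) * (B i * (2 * (Real.sqrt 2 * t) * B i)) := by
            apply mul_le_mul_of_nonneg_left _ (mul_nonneg ha2 htp2)
            exact mul_le_mul (hxiabs i) (hLabs i hi') (abs_nonneg _) hBnn
        _ = a (2*i+2) * (2 * Real.sqrt 2 * (B i)^2) * (t ^ (2*(N-1) - (2*i+2)) * t) := by
            ring
        _ = a (2*i+2) * (2 * Real.sqrt 2 * (B i)^2) * t ^ (2*(N-1) - (2*i+2) + 1) := by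
            rw [pow_succ]; ring
        _ ≤ a (2*i+2) * (2 * Real.sqrt 2 * (B i)^2) * t ^ (2*N-1) := by
            apply mul_le_mul_of_nonneg_left (pow_le_pow_right₀ h1t (by omega))
            exact mul_nonneg ha2 (mul_nonneg (by positivity) (by positivity))
    calc |a (2*i+1) * t ^ (2*(N-1) - (2*i+1)) * (pc x i * xi N V i x)
          + a (2*i+2) * t ^ (2*(N-1) - (2*i+2)) * (xi N V i x * LFxi N V i x)|
        ≤ |a (2*i+1) * t ^ (2*(N-1) - (2*i+1)) * (pc x i * xi N V i x)|
          + |a (2*i+2) * t ^ (2*(N-1) - (2*i+2)) * (xi N V i x * LFxi N V i x)| :=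
          abs_add_le _ _
      _ ≤ a (2*i+1) * (Real.sqrt 2 * B i) * t ^ (2*N-1)
          + a (2*i+2) * (2 * Real.sqrt 2 * (B i)^2) * t ^ (2*N-1) := add_le_add key1 key2
      _ = (a (2*i+1) * (Real.sqrt 2 * B i) + a (2*i+2) * (2 * Real.sqrt 2 * (B i)^2))
            * t ^ (2*N-1) := by ring
  -- the sum is bounded
  set S : ℝ := ∑ i ∈ Finset.range (N-1),
      (a (2*i+1) * t ^ (2*(N-1) - (2*i+1)) * (pc x i * xi N V i x)
        + a (2*i+2) * t ^ (2*(N-1) - (2*i+2)) * (xi N V i x * LFxi N V i x)) with hSdef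
  have hS : |S| ≤ C * t ^ (2*N-1) := by
    calc |S| ≤ ∑ i ∈ Finset.range (N-1),
          |a (2*i+1) * t ^ (2*(N-1) - (2*i+1)) * (pc x i * xi N V i x)
            + a (2*i+2) * t ^ (2*(N-1) - (2*i+2)) * (xi N V i x * LFxi N V i x)| :=
          Finset.abs_sum_le_sum_abs _ _
      _ ≤ ∑ i ∈ Finset.range (N-1),
            (a (2*i+1) * (Real.sqrt 2 * B i) + a (2*i+2) * (2 * Real.sqrt 2 * (B i)^2))
              * t ^ (2*N-1) := Finset.sum_le_sum hterm
      _ = C * t ^ (2*N-1) := by rw [hCdef, Finset.sum_mul]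
  have hW : Wrot N V (Function.update a 0 a₀) x = a₀ * t ^ (2*N-1) - S := by
    rw [Wrot, Function.update_self, hSdef, ← ht]
    congr 1
  have htpnn : (1:ℝ) ≤ t ^ (2*N-1) := one_le_pow₀ h1t
  obtain ⟨hSl, hSr⟩ := abs_le.mp hS
  rw [hW]
  constructor
  · nlinarith [mul_nonneg (show (0:ℝ) ≤ a₀ - 2*C by linarith) (show (0:ℝ) ≤ t^(2*N-1) by linarith)]
  · nlinarith [mul_nonneg (show (0:ℝ) ≤ a₀ - C by linarith) (show (0:ℝ) ≤ t^(2*N-1) by linarith)]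

end
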